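/- Let H be a Hermitian operator on ℂⁿ with orthonormal eigenbasis v₁, …, v_n and real eigenvalues λ₁, …, λ_n satisfying λ_n = 0 and Δ < λ_k ≤ 1 for k ≠ n, where Δ ∈ (0,1]. Let l = ⌈log₂(1/Δ)⌉ + 1, τ = 2π/Δ, and p̂ = Σ_{q=0}^{2^l−1} (q/2^l)|q⟩⟨q| on ℂ^{2^l}, with x₀ the uniform superposition in ℂ^{2^l}. Let ψ₀ = Σ_j α_j v_j be a unit vector with α_n ≠ 0, let ε ∈ (0,1), set ε′ = ε|α_n|² and K = ⌈log₂(1/ε′)⌉. On ℂⁿ ⊗ (ℂ^{2^l})^{⊗K}, let U_j = exp(−iτ H ⊗ p̂_j) where p̂_j acts as p̂ on the j-th pointer block and as identity elsewhere, and let ψ_f = U_K ⋯ U_1 (ψ₀ ⊗ x₀^{⊗K}). Then the (unnormalized) system vector obtained by pairing the pointer registers of ψ_f with x₀^{⊗K}, namely φ̃ = (I_{ℂⁿ} ⊗ ⟨x₀^{⊗K}|) ψ_f, equals α_n (v_n + err) for some vector err ∈ ℂⁿ orthogonal to v_n with ‖err‖ ≤ ε′/|α_n| ≤ ε. -/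

import Mathlib

open Finset Matrix Complex

open Matrix NormedSpace in
lemma exp_mulVec_eigen {ι : Type*} [Fintype ι] [DecidableEq ι]
    (M : Matrix ι ι ℂ) (u : ι → ℂ) (μ : ℂ) (h : M.mulVec u = μ • u) :
    (NormedSpace.exp M).mulVec u = Complex.exp μ • u := by
  letI : NormedRing (Matrix ι ι ℂ) := Matrix.linftyOpNormedRing
  letI : NormedAlgebra ℂ (Matrix ι ι ℂ) := Matrix.linftyOpNormedAlgebra
  have hpow : ∀ k : ℕ, (M ^ k).mulVec u = μ ^ k • u := by
    intro k
    induction k with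
    | zero => simp [Matrix.one_mulVec]
    | succ k ih =>
        rw [pow_succ', ← Matrix.mulVec_mulVec, ih, Matrix.mulVec_smul, h, smul_smul,
          ← pow_succ]
  have hsum : Summable (fun k : ℕ => ((k.factorial : ℂ))⁻¹ • M ^ k) := expSeries_summable' M
  let Lu : Matrix ι ι ℂ →ₗ[ℂ] (ι → ℂ) :=
    { toFun := fun B => B.mulVec u
      map_add' := fun B C => Matrix.add_mulVec B C u
      map_smul' := fun c B => Matrix.smul_mulVec c B u }
  have hLc : Continuous Lu := Lu.continuous_of_finiteDimensional
  have h1 : (NormedSpace.exp M).mulVec u = Lu (∑' k : ℕ, ((k.factorial : ℂ))⁻¹ • M ^ k) := by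
    rw [exp_eq_tsum (𝕂 := ℂ)]
    rfl
  rw [h1]
  have h3 : Lu (∑' k : ℕ, ((k.factorial : ℂ))⁻¹ • M ^ k)
      = ∑' k : ℕ, Lu (((k.factorial : ℂ))⁻¹ • M ^ k) :=
    Lu.toContinuousLinearMap.map_tsum hsum
  rw [h3]
  have h2 : ∀ k : ℕ, Lu (((k.factorial : ℂ))⁻¹ • M ^ k) = (((k.factorial : ℂ))⁻¹ * μ ^ k) • u := by
    intro k
    show Matrix.mulVec (((k.factorial : ℂ))⁻¹ • M ^ k) u = _
    rw [Matrix.smul_mulVec, hpow, smul_smul]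
  simp only [h2]
  rw [Summable.tsum_smul_const ?_]
  · congr 1
    have := congrFun Complex.exp_eq_exp_ℂ μ
    rw [this, exp_eq_tsum (𝕂 := ℂ)]
    simp [smul_eq_mul]
  · simpa [smul_eq_mul] using expSeries_summable' (𝕂 := ℂ) (𝔸 := ℂ) μ

lemma list_prod_mulVec_eigen {ι : Type*} [Fintype ι] [DecidableEq ι] (u : ι → ℂ) :
    ∀ (L : List (Matrix ι ι ℂ × ℂ)), (∀ p ∈ L, p.1.mulVec u = p.2 • u) →
      ((L.map Prod.fst).prod).mulVec u = (L.map Prod.snd).prod • u := by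
  intro L
  induction L with
  | nil => intro _; simp [Matrix.one_mulVec]
  | cons p L ih =>
      intro h
      simp only [List.map_cons, List.prod_cons]
      rw [← Matrix.mulVec_mulVec, ih (fun q hq => h q (List.mem_cons_of_mem _ hq)),
        Matrix.mulVec_smul, h p (List.mem_cons_self), smul_smul, mul_comm]

lemma geom_abs_bound (θ : ℝ) (N : ℕ) (hθ0 : 0 < θ) (hθπ : θ ≤ Real.pi) :
    Real.sin (θ / 2) > 0 ∧
    ‖∑ q ∈ Finset.range N, Complex.exp (-(Complex.I * θ)) ^ q‖
      ≤ 1 / Real.sin (θ / 2) := by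
  have hs : 0 < Real.sin (θ / 2) :=
    Real.sin_pos_of_pos_of_lt_pi (by linarith) (by linarith [Real.pi_pos])
  refine ⟨hs, ?_⟩
  set r : ℂ := Complex.exp (-(Complex.I * θ)) with hr
  have hre : r = Complex.exp ((-θ : ℝ) * Complex.I) := by
    rw [hr]; congr 1; push_cast; ring
  have habs1 : ‖r‖ = 1 := by rw [hre]; exact Complex.norm_exp_ofReal_mul_I _
  have hcos : Real.cos θ = 1 - 2 * Real.sin (θ / 2) ^ 2 := by
    have := Real.cos_two_mul' (θ / 2)
    have h2 := Real.sin_sq_add_cos_sq (θ / 2)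
    rw [show 2 * (θ / 2) = θ by ring] at this
    nlinarith
  have hsub : ‖r - 1‖ = 2 * Real.sin (θ / 2) := by
    have : r - 1 = ((Real.cos θ - 1 : ℝ) : ℂ) + ((-Real.sin θ : ℝ) : ℂ) * Complex.I := by
      rw [hre, Complex.exp_mul_I, ← Complex.ofReal_cos, ← Complex.ofReal_sin,
        Real.cos_neg, Real.sin_neg]
      push_cast; ring
    rw [this, Complex.norm_def, Complex.normSq_add_mul_I]
    rw [show (Real.cos θ - 1) ^ 2 + (-Real.sin θ) ^ 2 = (2 * Real.sin (θ / 2)) ^ 2 by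
      nlinarith [Real.sin_sq_add_cos_sq θ]]
    exact Real.sqrt_sq (by positivity)
  have hne : r ≠ 1 := by
    intro hr1
    rw [hr1] at hsub; simp at hsub; nlinarith
  rw [geom_sum_eq hne, norm_div, hsub]
  have hnum : ‖r ^ N - 1‖ ≤ 2 := by
    calc ‖r ^ N - 1‖ ≤ ‖r ^ N‖ + ‖(1:ℂ)‖ := by
          simpa using norm_sub_le (r ^ N) 1
      _ ≤ 2 := by rw [norm_pow, habs1]; norm_num
  rw [div_le_div_iff₀ (by positivity) hs]
  calc ‖r ^ N - 1‖ * Real.sin (θ / 2)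
      ≤ 2 * Real.sin (θ / 2) := by nlinarith [norm_nonneg (r ^ N - 1)]
    _ = 1 * (2 * Real.sin (θ / 2)) := by ring

lemma orth_expand {n : ℕ} (v : Fin n → Fin n → ℂ)
    (horth : ∀ i j, ∑ x, (starRingEnd ℂ) (v i x) * v j x = if i = j then 1 else 0)
    (β : Fin n → ℂ) :
    ∑ x, ‖∑ k, β k * v k x‖ ^ 2 = ∑ k, ‖β k‖ ^ 2 := by
  have key : (∑ x, ((∑ k, β k * v k x) * (starRingEnd ℂ) (∑ k, β k * v k x)) : ℂ)
      = ∑ k, (β k * (starRingEnd ℂ) (β k)) := by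
    have expand : ∀ x : Fin n, (∑ k, β k * v k x) * (starRingEnd ℂ) (∑ k, β k * v k x)
        = ∑ j, ∑ k, ((starRingEnd ℂ) (β j) * β k) * ((starRingEnd ℂ) (v j x) * v k x) := by
      intro x
      rw [map_sum, Finset.sum_mul_sum, Finset.sum_comm]
      refine Finset.sum_congr rfl fun j _ => Finset.sum_congr rfl fun k _ => ?_
      simp only [_root_.map_mul]; ring
    simp only [expand]
    rw [Finset.sum_comm]
    have inner : ∀ j : Fin n, ∑ x, ∑ k, ((starRingEnd ℂ) (β j) * β k) * ((starRingEnd ℂ) (v j x) * v k x)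
        = β j * (starRingEnd ℂ) (β j) := by
      intro j
      rw [Finset.sum_comm]
      have : ∀ k : Fin n, ∑ x, ((starRingEnd ℂ) (β j) * β k) * ((starRingEnd ℂ) (v j x) * v k x)
          = ((starRingEnd ℂ) (β j) * β k) * (if j = k then 1 else 0) := by
        intro k
        rw [← Finset.mul_sum, horth]
      simp only [this, mul_ite, mul_one, mul_zero]
      rw [Finset.sum_ite_eq univ j (fun k => (starRingEnd ℂ) (β j) * β k)]
      simp [mul_comm]
    exact Finset.sum_congr rfl fun j _ => inner j
  have cast1 : ((∑ x, ‖∑ k, β k * v k x‖ ^ 2 : ℝ) : ℂ)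
      = ∑ x, ((∑ k, β k * v k x) * (starRingEnd ℂ) (∑ k, β k * v k x)) := by
    push_cast
    refine Finset.sum_congr rfl fun x _ => ?_
    rw [Complex.mul_conj, Complex.normSq_eq_norm_sq]; push_cast; ring
  have cast2 : ((∑ k, ‖β k‖ ^ 2 : ℝ) : ℂ) = ∑ k, (β k * (starRingEnd ℂ) (β k)) := by
    push_cast
    refine Finset.sum_congr rfl fun k _ => ?_
    rw [Complex.mul_conj, Complex.normSq_eq_norm_sq]; push_cast; ring
  have := cast1.trans (key.trans cast2.symm)
  exact_mod_cast this

set_option maxHeartbeats 4000000 in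
/-- Repeating the von Neumann measurement evolution `K = ⌈log₂(1/ε')⌉`
times with fresh pointer blocks and pairing the pointers with `x₀^{⊗K}` yields an
unnormalized system vector `α_n (v_n + err)` with `err ⊥ v_n` and
`‖err‖ ≤ ε'/|α_n| ≤ ε`. -/
theorem von_neumann_repeated_rounds
    (n : ℕ) (hn : 1 ≤ n)
    (H : Matrix (Fin n) (Fin n) ℂ) (hH : H.IsHermitian)
    (v : Fin n → Fin n → ℂ)
    (horth : ∀ i j, ∑ x, (starRingEnd ℂ) (v i x) * v j x = if i = j then 1 else 0)
    (lam : Fin n → ℝ)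
    (heig : ∀ j, H.mulVec (v j) = (lam j : ℂ) • v j)
    (i₀ : Fin n) (Δ : ℝ) (hΔ : 0 < Δ) (hΔ1 : Δ ≤ 1)
    (h0 : lam i₀ = 0)
    (hgap : ∀ k, k ≠ i₀ → Δ < lam k ∧ lam k ≤ 1)
    (l : ℕ) (hl : l = ⌈Real.logb 2 (1 / Δ)⌉₊ + 1)
    (τ : ℝ) (hτ : τ = 2 * Real.pi / Δ)
    (phat : Matrix (Fin (2 ^ l)) (Fin (2 ^ l)) ℂ)
    (hphat : phat = Matrix.diagonal fun q : Fin (2 ^ l) => ((q : ℕ) : ℂ) / 2 ^ l)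
    (x₀ : Fin (2 ^ l) → ℂ)
    (hx₀ : ∀ q, x₀ q = ((1 / Real.sqrt (2 ^ l) : ℝ) : ℂ))
    (α : Fin n → ℂ) (ψ₀ : Fin n → ℂ)
    (hψ₀ : ∀ x, ψ₀ x = ∑ j, α j * v j x)
    (hunit : ∑ x, ‖ψ₀ x‖ ^ 2 = 1)
    (hα : α i₀ ≠ 0)
    (ε ε' : ℝ) (hε : 0 < ε) (hε1 : ε < 1)
    (hε' : ε' = ε * ‖α i₀‖ ^ 2)
    (K : ℕ) (hK : K = ⌈Real.logb 2 (1 / ε')⌉₊)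
    -- the Hamiltonians `H ⊗ p̂_j`, acting as `p̂` on the `j`-th pointer block
    (A : Fin K → Matrix (Fin n × (Fin K → Fin (2 ^ l)))
        (Fin n × (Fin K → Fin (2 ^ l))) ℂ)
    (hA : ∀ j a b, A j a b = H a.1 b.1 * phat (a.2 j) (b.2 j) *
        ∏ m ∈ Finset.univ.erase j, (if a.2 m = b.2 m then (1 : ℂ) else 0))
    -- `ψ_f = U_K ⋯ U_1 (ψ₀ ⊗ x₀^{⊗K})`
    (ψf : Fin n × (Fin K → Fin (2 ^ l)) → ℂ)
    (hψf : ψf = ((List.ofFn fun j : Fin K =>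
        NormedSpace.exp ((-(Complex.I * τ)) • A j)).reverse.prod).mulVec
        (fun p => ψ₀ p.1 * ∏ j, x₀ (p.2 j)))
    -- pairing the pointer registers with `x₀^{⊗K}`
    (φ : Fin n → ℂ)
    (hφ : ∀ a, φ a = ∑ qs : Fin K → Fin (2 ^ l),
        (∏ j, (starRingEnd ℂ) (x₀ (qs j))) * ψf (a, qs)) :
    ∃ err : Fin n → ℂ,
      (∑ x, (starRingEnd ℂ) (v i₀ x) * err x = 0) ∧
      (∀ x, φ x = α i₀ * (v i₀ x + err x)) ∧
      Real.sqrt (∑ x, ‖err x‖ ^ 2) ≤ ε' / ‖α i₀‖ ∧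
      ε' / ‖α i₀‖ ≤ ε := by
  classical
  set u : Fin n → (Fin K → Fin (2 ^ l)) → (Fin n × (Fin K → Fin (2 ^ l))) → ℂ :=
    fun k qs p => v k p.1 * (if p.2 = qs then 1 else 0) with hu
  set e : Fin n → Fin (2 ^ l) → ℂ :=
    fun k q => Complex.exp (-(Complex.I * (τ : ℂ)) * ((lam k : ℂ) * (((q : ℕ) : ℂ) / 2 ^ l)))
    with he
  -- eigenvector property of A j
  have hAeig : ∀ (j : Fin K) (k : Fin n) (qs : Fin K → Fin (2 ^ l)),
      (A j).mulVec (u k qs) = ((lam k : ℂ) * (((qs j : ℕ) : ℂ) / 2 ^ l)) • u k qs := by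
    intro j k qs
    funext a
    show ∑ b : Fin n × (Fin K → Fin (2 ^ l)), A j a b * _ = _
    rw [Fintype.sum_prod_type]
    have hinner : ∀ b1 : Fin n,
        ∑ b2 : Fin K → Fin (2 ^ l), A j a (b1, b2) * (v k b1 * (if b2 = qs then 1 else 0))
        = A j a (b1, qs) * v k b1 := by
      intro b1
      rw [Finset.sum_eq_single qs]
      · simp
      · intro b2 _ hne; simp [hne]
      · intro habs; exact absurd (Finset.mem_univ qs) habs
    simp only [hu, hinner]
    by_cases h2 : a.2 = qs
    · have hj : ∀ m, a.2 m = qs m := fun m => congrFun h2 m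
      have hAval : ∀ b1, A j a (b1, qs) = H a.1 b1 * (((qs j : ℕ) : ℂ) / 2 ^ l) := by
        intro b1
        rw [hA, hphat]
        simp [Matrix.diagonal_apply, hj]
      simp only [hAval]
      have heq := congrFun (heig k) a.1
      simp only [Matrix.mulVec, dotProduct, Pi.smul_apply, smul_eq_mul] at heq
      have hre : ∀ b1, H a.1 b1 * (((qs j : ℕ) : ℂ) / 2 ^ l) * v k b1
          = (((qs j : ℕ) : ℂ) / 2 ^ l) * (H a.1 b1 * v k b1) := fun b1 => by ring
      simp only [hre, ← Finset.mul_sum, heq]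
      simp only [Pi.smul_apply, smul_eq_mul, h2, eq_self_iff_true, if_true, mul_one]
      ring
    · have hz' : ∀ b1, A j a (b1, qs) = 0 := by
        intro b1
        rw [hA]
        rcases Function.ne_iff.mp h2 with ⟨m, hm⟩
        by_cases hmj : m = j
        · subst hmj
          rw [hphat]
          simp [Matrix.diagonal_apply, hm]
        · have : ∏ m' ∈ Finset.univ.erase j, (if a.2 m' = qs m' then (1:ℂ) else 0) = 0 :=
            Finset.prod_eq_zero (Finset.mem_erase.mpr ⟨hmj, Finset.mem_univ m⟩) (by simp [hm])
          rw [this, mul_zero]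
      simp [hz', h2]
  have hUeig : ∀ (j : Fin K) (k : Fin n) (qs : Fin K → Fin (2 ^ l)),
      (NormedSpace.exp ((-(Complex.I * (τ : ℂ))) • A j)).mulVec (u k qs)
        = e k (qs j) • u k qs := by
    intro j k qs
    have h1 : ((-(Complex.I * (τ : ℂ))) • A j).mulVec (u k qs)
        = ((-(Complex.I * (τ : ℂ))) * ((lam k : ℂ) * (((qs j : ℕ) : ℂ) / 2 ^ l))) • u k qs := by
      rw [Matrix.smul_mulVec, hAeig, smul_smul]
    exact exp_mulVec_eigen _ _ _ h1
  have hMeig : ∀ (k : Fin n) (qs : Fin K → Fin (2 ^ l)),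
      (((List.ofFn fun j : Fin K =>
          NormedSpace.exp ((-(Complex.I * (τ : ℂ))) • A j)).reverse.prod)).mulVec (u k qs)
        = (∏ j, e k (qs j)) • u k qs := by
    intro k qs
    have hmem : ∀ p ∈ (List.ofFn fun j : Fin K =>
        (NormedSpace.exp ((-(Complex.I * (τ : ℂ))) • A j), e k (qs j))).reverse,
        p.1.mulVec (u k qs) = p.2 • u k qs := by
      intro p hp
      rw [List.mem_reverse, List.mem_ofFn] at hp
      obtain ⟨j, rfl⟩ := hp
      exact hUeig j k qs
    have hres := list_prod_mulVec_eigen (u k qs) _ hmem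
    simpa only [List.map_reverse, List.map_ofFn, Function.comp_def, List.prod_reverse,
      List.prod_ofFn] using hres
  have hψf2 : ∀ p, ψf p = ∑ k, ∑ qs : Fin K → Fin (2 ^ l),
      ((α k * ∏ j, x₀ (qs j)) * ∏ j, e k (qs j)) * u k qs p := by
    have hinit : (fun p : Fin n × (Fin K → Fin (2 ^ l)) => ψ₀ p.1 * ∏ j, x₀ (p.2 j))
        = ∑ k, ∑ qs : Fin K → Fin (2 ^ l), (α k * ∏ j, x₀ (qs j)) • u k qs := by
      funext p
      simp only [Finset.sum_apply, Pi.smul_apply, smul_eq_mul, hψ₀, Finset.sum_mul]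
      refine Finset.sum_congr rfl fun k _ => ?_
      rw [Finset.sum_eq_single p.2]
      · simp only [hu]
        simp
        ring
      · intro qs _ hne
        simp only [hu]
        simp [Ne.symm hne]
      · intro habs; exact absurd (Finset.mem_univ _) habs
    intro p
    rw [hψf, hinit]
    have hlin : (((List.ofFn fun j : Fin K =>
          NormedSpace.exp ((-(Complex.I * (τ : ℂ))) • A j)).reverse.prod)).mulVec
          (∑ k, ∑ qs : Fin K → Fin (2 ^ l), (α k * ∏ j, x₀ (qs j)) • u k qs)
        = ∑ k, ∑ qs : Fin K → Fin (2 ^ l), (α k * ∏ j, x₀ (qs j)) •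
            ((((List.ofFn fun j : Fin K =>
              NormedSpace.exp ((-(Complex.I * (τ : ℂ))) • A j)).reverse.prod)).mulVec
              (u k qs)) := by
      rw [← Matrix.mulVecLin_apply, map_sum]
      refine Finset.sum_congr rfl fun k _ => ?_
      rw [map_sum]
      exact Finset.sum_congr rfl fun qs _ => by rw [LinearMap.map_smul, Matrix.mulVecLin_apply]
    rw [hlin]
    simp only [hMeig, Finset.sum_apply, Pi.smul_apply, smul_eq_mul]
    exact Finset.sum_congr rfl fun k _ => Finset.sum_congr rfl fun qs _ => by ring
  have hφ2 : ∀ a, φ a = ∑ k,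
      (α k * (∑ q, (starRingEnd ℂ) (x₀ q) * x₀ q * e k q) ^ K) * v k a := by
    intro a
    rw [hφ]
    simp only [hψf2, Finset.mul_sum]
    rw [Finset.sum_comm]
    refine Finset.sum_congr rfl fun k _ => ?_
    rw [Finset.sum_comm]
    have step1 : ∀ qs : Fin K → Fin (2 ^ l),
        ∑ qs' : Fin K → Fin (2 ^ l), (∏ j, (starRingEnd ℂ) (x₀ (qs' j))) *
          (((α k * ∏ j, x₀ (qs j)) * ∏ j, e k (qs j)) * u k qs (a, qs'))
        = (α k * v k a) * ∏ j, ((starRingEnd ℂ) (x₀ (qs j)) * x₀ (qs j) * e k (qs j)) := by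
      intro qs
      rw [Finset.sum_eq_single qs]
      · simp only [hu]
        simp only [Finset.prod_mul_distrib]
        simp
        ring
      · intro qs' _ hne
        simp only [hu]
        simp [hne]
      · intro habs; exact absurd (Finset.mem_univ _) habs
    refine (Finset.sum_congr rfl fun qs _ => step1 qs).trans ?_
    have hps : (∏ _j : Fin K, ∑ q : Fin (2 ^ l), ((starRingEnd ℂ) (x₀ q) * x₀ q * e k q))
        = ∑ qs : Fin K → Fin (2 ^ l),
            ∏ j, ((starRingEnd ℂ) (x₀ (qs j)) * x₀ (qs j) * e k (qs j)) := by
      rw [Finset.prod_univ_sum (fun _ => Finset.univ)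
        (fun _ q => (starRingEnd ℂ) (x₀ q) * x₀ q * e k q), Fintype.piFinset_univ]
    rw [← Finset.mul_sum, ← hps, Finset.prod_const, Finset.card_univ, Fintype.card_fin]
    ring
  set c : Fin n → ℂ := fun k => ∑ q, (starRingEnd ℂ) (x₀ q) * x₀ q * e k q with hc
  have hxx : ∀ q, (starRingEnd ℂ) (x₀ q) * x₀ q = ((2 : ℂ) ^ l)⁻¹ := by
    intro q
    rw [hx₀ q, Complex.conj_ofReal, ← Complex.ofReal_mul,
      show (1 / Real.sqrt (2 ^ l)) * (1 / Real.sqrt (2 ^ l)) = ((2 : ℝ) ^ l)⁻¹ by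
        rw [div_mul_div_comm, one_mul, Real.mul_self_sqrt (by positivity)]
        norm_num]
    push_cast
    norm_num
  have hci : c i₀ = 1 := by
    have he1 : ∀ q, e i₀ q = 1 := by
      intro q
      simp [he, h0]
    simp only [hc, hxx, he1, mul_one]
    rw [Finset.sum_const, Finset.card_univ, Fintype.card_fin, nsmul_eq_mul]
    push_cast
    field_simp
  have hck : ∀ k, k ≠ i₀ → ‖c k‖ ≤ 1 / 2 := by
    intro k hk
    obtain ⟨hgap1, hgap2⟩ := hgap k hk
    have hlam0 : 0 < lam k := lt_trans hΔ hgap1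
    have hπ := Real.pi_pos
    have h2l : (0:ℝ) < 2 ^ l := by positivity
    have hl1 : 1 ≤ l := by rw [hl]; omega
    have hld : 1 / Δ ≤ (2:ℝ) ^ (l - 1) := by
      have h1 : Real.logb 2 (1 / Δ) ≤ ((l - 1 : ℕ) : ℝ) := by
        rw [hl]
        simp only [Nat.add_sub_cancel]
        exact Nat.le_ceil _
      calc (1:ℝ)/Δ = 2 ^ Real.logb 2 (1/Δ) :=
            (Real.rpow_logb (by norm_num) (by norm_num) (by positivity)).symm
        _ ≤ (2:ℝ) ^ (((l - 1 : ℕ)) : ℝ) := Real.rpow_le_rpow_of_exponent_le (by norm_num) h1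
        _ = 2 ^ (l - 1 : ℕ) := Real.rpow_natCast 2 (l - 1)
    have h2l' : (2:ℝ) * (2:ℝ) ^ (l - 1) = 2 ^ l := by
      rw [← pow_succ']
      congr 1
      omega
    set θ : ℝ := τ * lam k / 2 ^ l with hθ
    have hθ0 : 0 < θ := by rw [hθ, hτ]; positivity
    have hΔ2l : (2:ℝ) ≤ Δ * 2 ^ l := by
      have hmul := mul_le_mul_of_nonneg_left hld hΔ.le
      rw [mul_one_div, div_self (ne_of_gt hΔ)] at hmul
      nlinarith
    have hθval : θ = 2 * Real.pi * lam k / (Δ * 2 ^ l) := by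
      rw [hθ, hτ]
      field_simp
    have hθπ : θ ≤ Real.pi := by
      rw [hθval, div_le_iff₀ (by positivity)]
      nlinarith [mul_le_mul_of_nonneg_left hgap2 hπ.le,
        mul_le_mul_of_nonneg_left hΔ2l hπ.le]
    have h3 : 2 * Real.pi / 2 ^ l ≤ θ := by
      rw [hθval, div_le_div_iff₀ h2l (by positivity)]
      nlinarith [mul_le_mul_of_nonneg_right hgap1.le
        (mul_pos (by positivity : (0:ℝ) < 2 * Real.pi) h2l).le]
    have hsinlb : 2 / 2 ^ l ≤ Real.sin (θ / 2) := by
      have h1 : θ / 2 ≤ Real.pi / 2 := by linarith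
      have h2 := Real.mul_le_sin (x := θ / 2) (by linarith) h1
      calc (2:ℝ) / 2 ^ l = 2 / Real.pi * ((2 * Real.pi / 2 ^ l) / 2) := by
            field_simp
        _ ≤ 2 / Real.pi * (θ / 2) := by gcongr
        _ ≤ Real.sin (θ / 2) := h2
    obtain ⟨hsin0, hgeom⟩ := geom_abs_bound θ (2 ^ l) hθ0 hθπ
    have hek : ∀ q : Fin (2 ^ l), e k q = Complex.exp (-(Complex.I * (θ:ℂ))) ^ (q : ℕ) := by
      intro q
      simp only [he]
      rw [show (-(Complex.I * (τ:ℂ)) * ((lam k : ℂ) * (((q:ℕ):ℂ) / 2 ^ l)))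
          = ((q:ℕ):ℂ) * (-(Complex.I * (θ:ℂ))) by rw [hθ]; push_cast; ring]
      exact Complex.exp_nat_mul _ _
    have hsumr : c k = ((2:ℂ) ^ l)⁻¹ *
        ∑ q ∈ Finset.range (2 ^ l), Complex.exp (-(Complex.I * (θ:ℂ))) ^ q := by
      rw [hc]
      simp only [hxx, hek]
      rw [← Finset.mul_sum]
      congr 1
      exact Fin.sum_univ_eq_sum_range (fun q => Complex.exp (-(Complex.I * (θ:ℂ))) ^ q) (2 ^ l)
    rw [hsumr, norm_mul, norm_inv, norm_pow, Complex.norm_two]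
    have hbound2 : 1 / Real.sin (θ / 2) ≤ 2 ^ l / 2 := by
      rw [div_le_div_iff₀ hsin0 (by norm_num)]
      have h6 := mul_le_mul_of_nonneg_left hsinlb h2l.le
      rw [show (2:ℝ) ^ l * (2 / 2 ^ l) = 2 by field_simp] at h6
      linarith
    have habsle : ‖∑ q ∈ Finset.range (2 ^ l),
        Complex.exp (-(Complex.I * (θ:ℂ))) ^ q‖ ≤ 2 ^ l / 2 := hgeom.trans hbound2
    calc ((2:ℝ) ^ l)⁻¹ * ‖∑ q ∈ Finset.range (2 ^ l),
          Complex.exp (-(Complex.I * (θ:ℂ))) ^ q‖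
        ≤ ((2:ℝ) ^ l)⁻¹ * (2 ^ l / 2) := by gcongr
      _ = 1 / 2 := by field_simp
  have hαpos : 0 < ‖α i₀‖ := norm_pos_iff.mpr hα
  have hε'pos : 0 < ε' := by rw [hε']; positivity
  have hKb : (1 / 2 : ℝ) ^ K ≤ ε' := by
    have h1 : Real.logb 2 (1 / ε') ≤ (K : ℝ) := by
      rw [hK]; exact Nat.le_ceil _
    have h2 : (1 : ℝ) / ε' ≤ 2 ^ K := by
      calc (1 : ℝ) / ε' = 2 ^ Real.logb 2 (1 / ε') :=
            (Real.rpow_logb (by norm_num) (by norm_num) (by positivity)).symm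
        _ ≤ (2 : ℝ) ^ (K : ℝ) := Real.rpow_le_rpow_of_exponent_le (by norm_num) h1
        _ = 2 ^ K := Real.rpow_natCast 2 K
    have h3 : (0:ℝ) < 2 ^ K := by positivity
    rw [div_le_iff₀ hε'pos] at h2
    rw [div_pow, one_pow, div_le_iff₀ h3]
    nlinarith
  have hsumα : ∑ k, ‖α k‖ ^ 2 = 1 := by
    rw [← orth_expand v horth α, ← hunit]
    exact Finset.sum_congr rfl fun x _ => by rw [hψ₀ x]
  have habsα1 : ‖α i₀‖ ≤ 1 := by
    have h1 : ‖α i₀‖ ^ 2 ≤ 1 := by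
      rw [← hsumα]
      exact Finset.single_le_sum (f := fun k => ‖α k‖ ^ 2)
        (fun k _ => by positivity) (Finset.mem_univ i₀)
    nlinarith [norm_nonneg (α i₀)]
  set β : Fin n → ℂ := fun k => if k = i₀ then 0 else α k * c k ^ K / α i₀ with hβ
  refine ⟨fun x => ∑ k, β k * v k x, ?_, ?_, ?_, ?_⟩
  · -- orthogonality
    have h1 : ∀ k : Fin n, ∑ x, (starRingEnd ℂ) (v i₀ x) * (β k * v k x)
        = β k * (if i₀ = k then (1 : ℂ) else 0) := by
      intro k
      rw [← horth i₀ k, Finset.mul_sum]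
      exact Finset.sum_congr rfl fun x _ => by ring
    calc ∑ x, (starRingEnd ℂ) (v i₀ x) * ∑ k, β k * v k x
        = ∑ x, ∑ k, (starRingEnd ℂ) (v i₀ x) * (β k * v k x) := by
          simp only [Finset.mul_sum]
      _ = ∑ k, ∑ x, (starRingEnd ℂ) (v i₀ x) * (β k * v k x) := Finset.sum_comm
      _ = ∑ k, β k * (if i₀ = k then (1 : ℂ) else 0) :=
          Finset.sum_congr rfl fun k _ => h1 k
      _ = β i₀ := by simp [mul_ite, Finset.sum_ite_eq]
      _ = 0 := by simp [hβ]
  · -- φ = α i₀ (v i₀ + err)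
    intro x
    rw [hφ2 x]
    have hterm : ∀ k : Fin n, (α k * c k ^ K) * v k x
        = α i₀ * (β k * v k x) + (if k = i₀ then α i₀ * v i₀ x else 0) := by
      intro k
      by_cases hk : k = i₀
      · subst hk
        simp [hβ, hci]
      · simp only [hβ, if_neg hk, add_zero]
        field_simp
    rw [Finset.sum_congr rfl fun k _ => hterm k, Finset.sum_add_distrib,
      Finset.sum_ite_eq' univ i₀ (fun _ => α i₀ * v i₀ x)]
    simp only [Finset.mem_univ, if_true]
    rw [← Finset.mul_sum]
    ring
  · -- norm bound
    have hrw : ∑ x, ‖∑ k, β k * v k x‖ ^ 2 = ∑ k, ‖β k‖ ^ 2 :=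
      orth_expand v horth β
    have hβk : ∀ k, ‖β k‖ ≤ ‖α k‖ * (ε' / ‖α i₀‖) := by
      intro k
      by_cases hk : k = i₀
      · simp only [hβ, hk, if_pos rfl, norm_zero]
        positivity
      · simp only [hβ, if_neg hk]
        rw [norm_div, norm_mul, norm_pow]
        calc ‖α k‖ * ‖c k‖ ^ K / ‖α i₀‖
            ≤ ‖α k‖ * ε' / ‖α i₀‖ := by
              gcongr
              calc ‖c k‖ ^ K ≤ (1 / 2 : ℝ) ^ K :=
                    pow_le_pow_left₀ (norm_nonneg _) (hck k hk) K
                _ ≤ ε' := hKb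
          _ = ‖α k‖ * (ε' / ‖α i₀‖) := by rw [mul_div_assoc]
    have hsum2 : ∑ k, ‖β k‖ ^ 2 ≤ (ε' / ‖α i₀‖) ^ 2 := by
      calc ∑ k, ‖β k‖ ^ 2
          ≤ ∑ k, ‖α k‖ ^ 2 * (ε' / ‖α i₀‖) ^ 2 := by
            refine Finset.sum_le_sum fun k _ => ?_
            have h1 := hβk k
            have h2 := norm_nonneg (β k)
            have h3 := norm_nonneg (α k)
            have h4 : (0:ℝ) ≤ ε' / ‖α i₀‖ := div_nonneg hε'pos.le hαpos.le
            nlinarith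
        _ = (ε' / ‖α i₀‖) ^ 2 := by
            rw [← Finset.sum_mul, hsumα, one_mul]
    calc Real.sqrt (∑ x, ‖∑ k, β k * v k x‖ ^ 2)
        ≤ Real.sqrt ((ε' / ‖α i₀‖) ^ 2) := by
          rw [hrw]; exact Real.sqrt_le_sqrt hsum2
      _ = ε' / ‖α i₀‖ := Real.sqrt_sq (by positivity)
  · -- ε'/|α| ≤ ε
    rw [hε', show ε * ‖α i₀‖ ^ 2 / ‖α i₀‖
        = ε * ‖α i₀‖ by field_simp]
    nlinarith
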